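/- Let G be a graph, C a cycle factor of G (a spanning collection of pairwise vertex-disjoint cycles), and F a family of 4-cycles in G such that: (1) the 4-cycles in F are pairwise edge-disjoint; (2) each 4-cycle in F shares exactly one edge with each of exactly two distinct cycles of C and its other two edges lie outside C; and (3) the multigraph on the cycles of C with an edge for each element of F joining the two cycles it meets is a spanning tree. Then the symmetric difference of the edge set of C with the edge sets of the 4-cycles in F is a Hamilton cycle of G. -/

import Mathlib

open Relation SimpleGraph

private lemma treebound {N : Type*} [Finite N] {κ : Type*} [Finite κ] (f g : κ → N)
    (hc : ∀ x y : N, ReflTransGen (fun u v => ∃ j, (f j = u ∧ g j = v) ∨ (f j = v ∧ g j = u)) x y) :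
    Nat.card N ≤ Nat.card κ + 1 := by
  classical
  cases isEmpty_or_nonempty N with
  | inl h => simp [Nat.card_of_isEmpty]
  | inr h =>
  obtain ⟨r⟩ := h
  haveI : Nonempty N := ⟨r⟩
  set Gx : SimpleGraph N := SimpleGraph.fromEdgeSet {s | ∃ j, s = s(f j, g j)} with hGx
  have hreach : ∀ x y : N, Gx.Reachable x y := by
    intro x y
    induction hc x y with
    | refl => exact Reachable.refl _
    | tail _ hstep ih =>
      refine ih.trans ?_
      rename_i p q _
      obtain ⟨j, hj⟩ := hstep
      by_cases hpq : p = q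
      · exact hpq ▸ Reachable.refl _
      · refine Adj.reachable ?_
        rw [hGx, fromEdgeSet_adj]
        refine ⟨⟨j, ?_⟩, hpq⟩
        rcases hj with ⟨h1, h2⟩ | ⟨h1, h2⟩
        · rw [h1, h2]
        · rw [h1, h2, Sym2.eq_swap]
  have hconnGx : Gx.Connected := (connected_iff Gx).mpr ⟨hreach, ⟨r⟩⟩
  have key : ∀ n : N, n ≠ r → ∃ j : κ, ∃ n' : N,
      s(n, n') = s(f j, g j) ∧ Gx.dist n' r < Gx.dist n r := by
    intro n hn
    obtain ⟨p, hp⟩ := hconnGx.exists_walk_length_eq_dist n r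
    obtain ⟨n', hadj, q, rfl⟩ := p.exists_eq_cons_of_ne hn
    rw [Walk.length_cons] at hp
    have hd : Gx.dist n' r ≤ q.length := dist_le q
    have := fromEdgeSet_adj _ |>.mp hadj
    obtain ⟨⟨j, hsj⟩, -⟩ := this
    exact ⟨j, n', hsj, by omega⟩
  let F : {n : N // n ≠ r} → κ := fun n => (key n.1 n.2).choose
  have hF : Function.Injective F := by
    intro n1 n2 heq
    obtain ⟨n1', e1, d1⟩ := (key n1.1 n1.2).choose_spec
    obtain ⟨n2', e2, d2⟩ := (key n2.1 n2.2).choose_spec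
    rw [show (key n1.1 n1.2).choose = F n1 from rfl, heq] at e1
    rw [show (key n2.1 n2.2).choose = F n2 from rfl] at e2
    rw [← e2] at e1
    rcases Sym2.eq_iff.mp e1 with ⟨h1, h2⟩ | ⟨h1, h2⟩
    · exact Subtype.ext h1
    · rw [h1] at d1; rw [← h2] at d2; omega
  have hle : Nat.card {n : N // n ≠ r} ≤ Nat.card κ := Nat.card_le_card_of_injective F hF
  letI := Fintype.ofFinite N
  have hcard : Nat.card {n : N // n ≠ r} = Nat.card N - 1 := by
    rw [Nat.card_eq_fintype_card, Nat.card_eq_fintype_card]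
    have : Fintype.card {n : N // n ≠ r} = Fintype.card N - Fintype.card {n : N // n = r} :=
      Fintype.card_subtype_compl _
    rw [this, Fintype.card_subtype_eq]
  have hpos : 0 < Nat.card N := Nat.card_pos
  omega

private lemma no_bridge {V : Type*} [Fintype V] (X : SimpleGraph V)
    (h2 : ∀ v : V, Set.ncard {w | X.Adj v w} = 2) {u v : V} (huv : X.Adj u v) :
    (X.deleteEdges {s(u, v)}).Reachable u v := by
  classical
  by_contra hnr
  set X' := X.deleteEdges {s(u, v)} with hX'
  have hune : u ≠ v := huv.ne
  set Z : SimpleGraph V := SimpleGraph.mk (fun x y => X'.Adj x y ∧ X'.Reachable u x)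
    (by
      refine ⟨?_⟩
      rintro x y ⟨hxy, hux⟩
      exact ⟨hxy.symm, hux.trans hxy.reachable⟩)
    (by refine ⟨?_⟩; rintro x ⟨hxx, _⟩; exact hxx.ne rfl) with hZdef
  have hZadj : ∀ x y, Z.Adj x y ↔ X'.Adj x y ∧ X'.Reachable u x := fun x y => Iff.rfl
  letI : DecidableRel Z.Adj := Classical.decRel _
  have hdeg : ∀ x : V, Z.degree x = (Z.neighborSet x).ncard := by
    intro x
    rw [← card_neighborFinset_eq_degree, neighborFinset_def, Set.ncard_eq_toFinset_card']
  have hNu : Z.neighborSet u = {w | X.Adj u w} \ {v} := by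
    ext w
    simp only [mem_neighborSet, hZadj, Set.mem_diff, Set.mem_setOf_eq, Set.mem_singleton_iff]
    constructor
    · rintro ⟨hadj, -⟩
      rw [hX', deleteEdges_adj] at hadj
      refine ⟨hadj.1, fun hwv => hadj.2 ?_⟩
      rw [hwv]; rfl
    · rintro ⟨hadj, hne⟩
      refine ⟨?_, Reachable.refl _⟩
      rw [hX', deleteEdges_adj]
      refine ⟨hadj, fun hmem => ?_⟩
      simp only [Set.mem_singleton_iff, Sym2.eq_iff] at hmem
      rcases hmem with ⟨-, h⟩ | ⟨h, -⟩
      · exact hne h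
      · exact hune h
  have hdegu : Z.degree u = 1 := by
    rw [hdeg, hNu, Set.ncard_diff_singleton_of_mem (show v ∈ {w | X.Adj u w} from huv), h2 u]
  have hdegw : ∀ w : V, w ≠ u → Even (Z.degree w) := by
    intro w hwne
    by_cases hr : X'.Reachable u w
    · have hwv : w ≠ v := fun h => hnr (h ▸ hr)
      have hN : Z.neighborSet w = {y | X.Adj w y} := by
        ext y
        simp only [mem_neighborSet, hZadj, Set.mem_setOf_eq]
        constructor
        · rintro ⟨hadj, -⟩
          rw [hX', deleteEdges_adj] at hadj
          exact hadj.1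
        · intro hadj
          refine ⟨?_, hr⟩
          rw [hX', deleteEdges_adj]
          refine ⟨hadj, fun hmem => ?_⟩
          simp only [Set.mem_singleton_iff, Sym2.eq_iff] at hmem
          rcases hmem with ⟨h, -⟩ | ⟨h, -⟩
          · exact hwne h
          · exact hwv h
      rw [hdeg, hN, h2 w]
      exact even_two
    · have hN : Z.neighborSet w = ∅ := by
        ext y
        simp only [mem_neighborSet, hZadj, Set.mem_empty_iff_false, iff_false, not_and]
        intro _ h
        exact hr h
      rw [hdeg, hN, Set.ncard_empty]
      exact Even.zero
  have hsum : Even (∑ x : V, Z.degree x) := by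
    rw [sum_degrees_eq_twice_card_edges]
    exact even_two_mul _
  rw [← Finset.add_sum_erase Finset.univ _ (Finset.mem_univ u), hdegu] at hsum
  have heven : Even (∑ x ∈ Finset.univ.erase u, Z.degree x) :=
    Finset.even_sum _ (fun x hx => hdegw x (Finset.ne_of_mem_erase hx))
  obtain ⟨k, hk⟩ := heven
  obtain ⟨m, hm⟩ := hsum
  omega

private lemma quad_ne {V : Type*} {aa bb cc dd : V} (h : [aa, bb, cc, dd].Pairwise (· ≠ ·)) :
    aa ≠ bb ∧ aa ≠ cc ∧ aa ≠ dd ∧ bb ≠ cc ∧ bb ≠ dd ∧ cc ≠ dd := by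
  simp only [List.pairwise_cons, List.mem_cons, List.mem_singleton, List.not_mem_nil] at h
  obtain ⟨h1, h2, h3, -⟩ := h
  refine ⟨h1 bb ?_, h1 cc ?_, h1 dd ?_, h2 cc ?_, h2 dd ?_, h3 dd ?_⟩ <;> tauto

private lemma partner {V : Type*} {aa bb cc dd v w : V} (C : SimpleGraph V)
    (hne : [aa, bb, cc, dd].Pairwise (· ≠ ·))
    (hab : C.Adj aa bb) (hcd : C.Adj cc dd) (hbc : ¬C.Adj bb cc) (hda : ¬C.Adj dd aa)
    (hmem : s(v, w) = s(aa, bb) ∨ s(v, w) = s(bb, cc) ∨ s(v, w) = s(cc, dd) ∨ s(v, w) = s(dd, aa)) :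
    (C.Adj v w → ((v = aa ∧ w = bb) ∨ (v = bb ∧ w = aa) ∨ (v = cc ∧ w = dd) ∨ (v = dd ∧ w = cc)))
    ∧ (¬C.Adj v w → ((v = bb ∧ w = cc) ∨ (v = cc ∧ w = bb) ∨ (v = dd ∧ w = aa) ∨ (v = aa ∧ w = dd))) := by
  obtain ⟨h1, h2, h3, h4, h5, h6⟩ := quad_ne hne
  have hba : ¬C.Adj cc bb := fun h => hbc h.symm
  have had : ¬C.Adj aa dd := fun h => hda h.symm
  have hab' : C.Adj bb aa := hab.symm
  have hcd' : C.Adj dd cc := hcd.symm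
  rcases hmem with h | h | h | h <;> rcases Sym2.eq_iff.mp h with ⟨rfl, rfl⟩ | ⟨rfl, rfl⟩ <;>
    constructor <;> intro hc <;> tauto

private lemma DEG {V : Type*} [Fintype V] (C : SimpleGraph V)
    (hC2 : ∀ v : V, Set.ncard {w | C.Adj v w} = 2)
    {ι : Type*} [Fintype ι] (a b c d : ι → V)
    (hquad : ∀ i, [a i, b i, c i, d i].Pairwise (· ≠ ·))
    (E : ι → Set (Sym2 V))
    (hE : ∀ i, E i = {s(a i, b i), s(b i, c i), s(c i, d i), s(d i, a i)})
    (hdisj : ∀ i j, i ≠ j → Disjoint (E i) (E j))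
    (hshare4 : ∀ i, C.Adj (a i) (b i) ∧ C.Adj (c i) (d i) ∧
      ¬ C.Adj (b i) (c i) ∧ ¬ C.Adj (d i) (a i))
    (S : Finset ι) (v : V) :
    Set.ncard {w | (SimpleGraph.fromEdgeSet (symmDiff C.edgeSet (⋃ i ∈ S, E i))).Adj v w} = 2 := by
  classical
  set US : Set (Sym2 V) := ⋃ i ∈ S, E i with hUSdef
  have hUS : ∀ s : Sym2 V, s ∈ US ↔ ∃ i ∈ S, s ∈ E i := by
    intro s; simp [hUSdef]
  have hEmem : ∀ i (s : Sym2 V), s ∈ E i ↔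
      s = s(a i, b i) ∨ s = s(b i, c i) ∨ s = s(c i, d i) ∨ s = s(d i, a i) := by
    intro i s; rw [hE i]; simp [Set.mem_insert_iff]
  -- the three pieces
  set A : Set V := {w | C.Adj v w ∧ s(v, w) ∉ US} with hA
  set R : Set V := {w | C.Adj v w ∧ s(v, w) ∈ US} with hR
  set T : Set V := {w | ¬C.Adj v w ∧ s(v, w) ∈ US} with hT
  have hUSne : ∀ w : V, s(v, w) ∈ US → v ≠ w := by
    intro w hw
    obtain ⟨i, -, hi⟩ := (hUS _).mp hw
    obtain ⟨n1, n2, n3, n4, n5, n6⟩ := quad_ne (hquad i)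
    rcases (hEmem i _).mp hi with h | h | h | h <;>
      rcases Sym2.eq_iff.mp h with ⟨rfl, rfl⟩ | ⟨rfl, rfl⟩
    exacts [n1, n1.symm, n4, n4.symm, n6, n6.symm, n3.symm, n3]
  have hNH : {w | (SimpleGraph.fromEdgeSet (symmDiff C.edgeSet US)).Adj v w} = A ∪ T := by
    ext w
    simp only [Set.mem_setOf_eq, fromEdgeSet_adj, Set.mem_symmDiff, mem_edgeSet, Set.mem_union,
      hA, hR, hT]
    constructor
    · rintro ⟨h | h, -⟩
      · exact Or.inl h
      · exact Or.inr ⟨h.2, h.1⟩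
    · rintro (⟨h1, h2⟩ | ⟨h1, h2⟩)
      · exact ⟨Or.inl ⟨h1, h2⟩, h1.ne⟩
      · exact ⟨Or.inr ⟨h2, h1⟩, hUSne w h2⟩
  have hNC : {w | C.Adj v w} = A ∪ R := by
    ext w
    simp only [Set.mem_setOf_eq, Set.mem_union, hA, hR]
    by_cases h : s(v, w) ∈ US <;> tauto
  -- the index set of quads through v
  set I : Set ι := {i : ι | i ∈ S ∧ (v = a i ∨ v = b i ∨ v = c i ∨ v = d i)} with hI
  set cp : ι → V := fun i =>
    if v = a i then b i else if v = b i then a i else if v = c i then d i else c i with hcp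
  set np : ι → V := fun i =>
    if v = a i then d i else if v = b i then c i else if v = c i then b i else a i with hnp
  have hcpval : ∀ i, (v = a i → cp i = b i) ∧ (v = b i → cp i = a i) ∧
      (v = c i → cp i = d i) ∧ (v = d i → cp i = c i) := by
    intro i
    obtain ⟨n1, n2, n3, n4, n5, n6⟩ := quad_ne (hquad i)
    refine ⟨fun hv => ?_, fun hv => ?_, fun hv => ?_, fun hv => ?_⟩ <;> simp only [hcp]
    · rw [if_pos hv]
    · rw [if_neg (fun h => n1 (h.symm.trans hv)), if_pos hv]
    · rw [if_neg (fun h => n2 (h.symm.trans hv)), if_neg (fun h => n4 (h.symm.trans hv)),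
        if_pos hv]
    · rw [if_neg (fun h => n3 (h.symm.trans hv)), if_neg (fun h => n5 (h.symm.trans hv)),
        if_neg (fun h => n6 (h.symm.trans hv))]
  have hnpval : ∀ i, (v = a i → np i = d i) ∧ (v = b i → np i = c i) ∧
      (v = c i → np i = b i) ∧ (v = d i → np i = a i) := by
    intro i
    obtain ⟨n1, n2, n3, n4, n5, n6⟩ := quad_ne (hquad i)
    refine ⟨fun hv => ?_, fun hv => ?_, fun hv => ?_, fun hv => ?_⟩ <;> simp only [hnp]
    · rw [if_pos hv]
    · rw [if_neg (fun h => n1 (h.symm.trans hv)), if_pos hv]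
    · rw [if_neg (fun h => n2 (h.symm.trans hv)), if_neg (fun h => n4 (h.symm.trans hv)),
        if_pos hv]
    · rw [if_neg (fun h => n3 (h.symm.trans hv)), if_neg (fun h => n5 (h.symm.trans hv)),
        if_neg (fun h => n6 (h.symm.trans hv))]
  have hcpE : ∀ i ∈ I, C.Adj v (cp i) ∧ s(v, cp i) ∈ E i := by
    rintro i ⟨-, hv⟩
    obtain ⟨c1, c2, c3, c4⟩ := hcpval i
    obtain ⟨s1, s2, s3, s4⟩ := hshare4 i
    rcases hv with hv | hv | hv | hv
    · rw [c1 hv, hv]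
      exact ⟨s1, (hEmem i _).mpr (Or.inl rfl)⟩
    · rw [c2 hv, hv]
      exact ⟨s1.symm, (hEmem i _).mpr (Or.inl Sym2.eq_swap)⟩
    · rw [c3 hv, hv]
      exact ⟨s2, (hEmem i _).mpr (Or.inr (Or.inr (Or.inl rfl)))⟩
    · rw [c4 hv, hv]
      exact ⟨s2.symm, (hEmem i _).mpr (Or.inr (Or.inr (Or.inl Sym2.eq_swap)))⟩
  have hnpE : ∀ i ∈ I, ¬C.Adj v (np i) ∧ s(v, np i) ∈ E i := by
    rintro i ⟨-, hv⟩
    obtain ⟨c1, c2, c3, c4⟩ := hnpval i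
    obtain ⟨s1, s2, s3, s4⟩ := hshare4 i
    rcases hv with hv | hv | hv | hv
    · rw [c1 hv, hv]
      exact ⟨fun h => s4 h.symm, (hEmem i _).mpr (Or.inr (Or.inr (Or.inr Sym2.eq_swap)))⟩
    · rw [c2 hv, hv]
      exact ⟨s3, (hEmem i _).mpr (Or.inr (Or.inl rfl))⟩
    · rw [c3 hv, hv]
      exact ⟨fun h => s3 h.symm, (hEmem i _).mpr (Or.inr (Or.inl Sym2.eq_swap))⟩
    · rw [c4 hv, hv]
      exact ⟨s4, (hEmem i _).mpr (Or.inr (Or.inr (Or.inr rfl)))⟩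
  have hRI : R = cp '' I := by
    ext w
    simp only [hR, Set.mem_setOf_eq, Set.mem_image]
    constructor
    · rintro ⟨hadj, hus⟩
      obtain ⟨i, hiS, hi⟩ := (hUS _).mp hus
      obtain ⟨s1, s2, s3, s4⟩ := hshare4 i
      obtain ⟨c1, c2, c3, c4⟩ := hcpval i
      have hp := (partner C (hquad i) s1 s2 s3 s4 ((hEmem i _).mp hi)).1 hadj
      rcases hp with ⟨hv, hw⟩ | ⟨hv, hw⟩ | ⟨hv, hw⟩ | ⟨hv, hw⟩
      · exact ⟨i, ⟨hiS, Or.inl hv⟩, (c1 hv).trans hw.symm⟩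
      · exact ⟨i, ⟨hiS, Or.inr (Or.inl hv)⟩, (c2 hv).trans hw.symm⟩
      · exact ⟨i, ⟨hiS, Or.inr (Or.inr (Or.inl hv))⟩, (c3 hv).trans hw.symm⟩
      · exact ⟨i, ⟨hiS, Or.inr (Or.inr (Or.inr hv))⟩, (c4 hv).trans hw.symm⟩
    · rintro ⟨i, hiI, rfl⟩
      obtain ⟨h1, h2⟩ := hcpE i hiI
      exact ⟨h1, (hUS _).mpr ⟨i, hiI.1, h2⟩⟩
  have hTI : T = np '' I := by
    ext w
    simp only [hT, Set.mem_setOf_eq, Set.mem_image]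
    constructor
    · rintro ⟨hadj, hus⟩
      obtain ⟨i, hiS, hi⟩ := (hUS _).mp hus
      obtain ⟨s1, s2, s3, s4⟩ := hshare4 i
      obtain ⟨c1, c2, c3, c4⟩ := hnpval i
      have hp := (partner C (hquad i) s1 s2 s3 s4 ((hEmem i _).mp hi)).2 hadj
      rcases hp with ⟨hv, hw⟩ | ⟨hv, hw⟩ | ⟨hv, hw⟩ | ⟨hv, hw⟩
      · exact ⟨i, ⟨hiS, Or.inr (Or.inl hv)⟩, (c2 hv).trans hw.symm⟩
      · exact ⟨i, ⟨hiS, Or.inr (Or.inr (Or.inl hv))⟩, (c3 hv).trans hw.symm⟩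
      · exact ⟨i, ⟨hiS, Or.inr (Or.inr (Or.inr hv))⟩, (c4 hv).trans hw.symm⟩
      · exact ⟨i, ⟨hiS, Or.inl hv⟩, (c1 hv).trans hw.symm⟩
    · rintro ⟨i, hiI, rfl⟩
      obtain ⟨h1, h2⟩ := hnpE i hiI
      exact ⟨h1, (hUS _).mpr ⟨i, hiI.1, h2⟩⟩
  have hinjcp : Set.InjOn cp I := by
    intro i hi j hj hij
    by_contra hne
    have h1 := (hcpE i hi).2
    have h2 := (hcpE j hj).2
    rw [hij] at h1
    exact Set.disjoint_left.mp (hdisj i j hne) h1 h2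
  have hinjnp : Set.InjOn np I := by
    intro i hi j hj hij
    by_contra hne
    have h1 := (hnpE i hi).2
    have h2 := (hnpE j hj).2
    rw [hij] at h1
    exact Set.disjoint_left.mp (hdisj i j hne) h1 h2
  have hRT : R.ncard = T.ncard := by
    rw [hRI, hTI, Set.ncard_image_of_injOn hinjcp, Set.ncard_image_of_injOn hinjnp]
  have hdisjAR : Disjoint A R := by
    rw [Set.disjoint_left]
    rintro w ⟨-, h1⟩ ⟨-, h2⟩
    exact h1 h2
  have hdisjAT : Disjoint A T := by
    rw [Set.disjoint_left]
    rintro w ⟨h1, -⟩ ⟨h2, -⟩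
    exact h2 h1
  have hsum : A.ncard + R.ncard = 2 := by
    rw [← Set.ncard_union_eq hdisjAR (Set.toFinite _) (Set.toFinite _), ← hNC]
    exact hC2 v
  rw [hNH, Set.ncard_union_eq hdisjAT (Set.toFinite _) (Set.toFinite _), ← hRT]
  exact hsum

private lemma reach_delete {V : Type*} (X : SimpleGraph V) (D : Set (Sym2 V))
    (h : ∀ e ∈ D, ∀ x y : V, e = s(x, y) → (X.deleteEdges D).Reachable x y) :
    ∀ x y : V, X.Reachable x y → (X.deleteEdges D).Reachable x y := by
  intro x y hxy
  rw [reachable_iff_reflTransGen] at hxy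
  induction hxy with
  | refl => exact Reachable.refl _
  | tail _ hstep ih =>
    refine ih.trans ?_
    rename_i p q _
    by_cases hpq : s(p, q) ∈ D
    · exact h _ hpq p q rfl
    · exact (Adj.reachable (by rw [deleteEdges_adj]; exact ⟨hstep, hpq⟩))

private lemma FWD {V : Type*} (C : SimpleGraph V)
    {ι : Type*} (a b c d : ι → V)
    (hquad : ∀ i, [a i, b i, c i, d i].Pairwise (· ≠ ·))
    (E : ι → Set (Sym2 V))
    (hE : ∀ i, E i = {s(a i, b i), s(b i, c i), s(c i, d i), s(d i, a i)})
    (hshare4 : ∀ i, C.Adj (a i) (b i) ∧ C.Adj (c i) (d i) ∧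
      ¬ C.Adj (b i) (c i) ∧ ¬ C.Adj (d i) (a i))
    (S : Finset ι) (u w : V)
    (h : (SimpleGraph.fromEdgeSet (symmDiff C.edgeSet (⋃ i ∈ S, E i))).Reachable u w) :
    Relation.ReflTransGen (fun K1 K2 => ∃ i ∈ S,
      (C.connectedComponentMk (a i) = K1 ∧ C.connectedComponentMk (c i) = K2) ∨
      (C.connectedComponentMk (a i) = K2 ∧ C.connectedComponentMk (c i) = K1))
      (C.connectedComponentMk u) (C.connectedComponentMk w) := by
  rw [reachable_iff_reflTransGen] at h
  induction h with
  | refl => exact ReflTransGen.refl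
  | tail _ hstep ih =>
    refine ih.trans ?_
    rename_i p q _
    rw [fromEdgeSet_adj] at hstep
    obtain ⟨hsd, hne⟩ := hstep
    rw [Set.mem_symmDiff] at hsd
    rcases hsd with ⟨hmem1, hmem2⟩ | ⟨hmem1, hmem2⟩
    · have : C.connectedComponentMk p = C.connectedComponentMk q :=
        ConnectedComponent.eq.mpr (Adj.reachable ((mem_edgeSet C).mp hmem1))
      rw [this]
    · have hU := hmem1
      have hnC := hmem2
      simp only [Set.mem_iUnion] at hU
      obtain ⟨i, hiS, hi⟩ := hU
      obtain ⟨s1, s2, s3, s4⟩ := hshare4 i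
      have hmm : s(p, q) = s(a i, b i) ∨ s(p, q) = s(b i, c i) ∨
          s(p, q) = s(c i, d i) ∨ s(p, q) = s(d i, a i) := by
        rw [hE i] at hi
        simpa using hi
      have hnadj : ¬ C.Adj p q := fun h => hnC ((mem_edgeSet C).mpr h)
      have hp := (partner C (hquad i) s1 s2 s3 s4 hmm).2 hnadj
      have hmkab : C.connectedComponentMk (a i) = C.connectedComponentMk (b i) :=
        ConnectedComponent.eq.mpr s1.reachable
      have hmkcd : C.connectedComponentMk (c i) = C.connectedComponentMk (d i) :=
        ConnectedComponent.eq.mpr s2.reachable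
      rcases hp with ⟨rfl, rfl⟩ | ⟨rfl, rfl⟩ | ⟨rfl, rfl⟩ | ⟨rfl, rfl⟩
      · exact ReflTransGen.single ⟨i, hiS, Or.inl ⟨hmkab, rfl⟩⟩
      · exact ReflTransGen.single ⟨i, hiS, Or.inr ⟨hmkab, rfl⟩⟩
      · exact ReflTransGen.single ⟨i, hiS, Or.inr ⟨rfl, hmkcd⟩⟩
      · exact ReflTransGen.single ⟨i, hiS, Or.inl ⟨rfl, hmkcd⟩⟩

/-- let `G` be a finite simple graph, `C` a cycle factor of `G` (a 2-regular
spanning subgraph), and `F` a family of 4-cycles of `G` (indexed by `ι`, the `i`-th 4-cycle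
having vertices `a i, b i, c i, d i` and edge set `E i`) such that:
(1) the 4-cycles are pairwise edge-disjoint;
(2) each 4-cycle shares exactly one edge with each of exactly two distinct cycles
    (connected components) of `C` — after relabelling, the edges `a i b i` and `c i d i` lie
    in `C`, in distinct components of `C`, while `b i c i` and `d i a i` do not lie in `C`;
(3) the multigraph on the cycles of `C` with an edge for each `i ∈ ι` joining the two
    components met by the `i`-th 4-cycle is a spanning tree (it is connected and has exactly
    one edge fewer than it has nodes).
Then the symmetric difference of the edge set of `C` with the edge sets of the 4-cycles is a
Hamilton cycle of `G`: a connected 2-regular spanning subgraph of `G`. -/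
theorem glue_cycle_factor_hamilton {V : Type*} [Fintype V] (G C : SimpleGraph V)
    (hCG : C ≤ G) (hC2 : ∀ v : V, Set.ncard {w | C.Adj v w} = 2)
    {ι : Type*} [Fintype ι] (a b c d : ι → V)
    (hquad : ∀ i, [a i, b i, c i, d i].Pairwise (· ≠ ·))
    (hGcyc : ∀ i, G.Adj (a i) (b i) ∧ G.Adj (b i) (c i) ∧
      G.Adj (c i) (d i) ∧ G.Adj (d i) (a i))
    (E : ι → Set (Sym2 V))
    (hE : ∀ i, E i = {s(a i, b i), s(b i, c i), s(c i, d i), s(d i, a i)})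
    -- (1) pairwise edge-disjointness:
    (hdisj : ∀ i j, i ≠ j → Disjoint (E i) (E j))
    -- (2) sharing exactly one edge with each of two distinct cycles of `C`:
    (hshare : ∀ i, C.Adj (a i) (b i) ∧ C.Adj (c i) (d i) ∧
      ¬ C.Adj (b i) (c i) ∧ ¬ C.Adj (d i) (a i) ∧
      C.connectedComponentMk (a i) ≠ C.connectedComponentMk (c i))
    -- (3) the auxiliary multigraph is a spanning tree:
    (hcount : Nat.card ι + 1 = Nat.card C.ConnectedComponent)
    (hconn : ∀ K K' : C.ConnectedComponent, Relation.ReflTransGen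
      (fun K1 K2 => ∃ i, (C.connectedComponentMk (a i) = K1 ∧
          C.connectedComponentMk (c i) = K2) ∨
        (C.connectedComponentMk (a i) = K2 ∧ C.connectedComponentMk (c i) = K1)) K K') :
    SimpleGraph.fromEdgeSet (symmDiff C.edgeSet (⋃ i, E i)) ≤ G ∧
    (SimpleGraph.fromEdgeSet (symmDiff C.edgeSet (⋃ i, E i))).Connected ∧
    ∀ v : V, Set.ncard
      {w | (SimpleGraph.fromEdgeSet (symmDiff C.edgeSet (⋃ i, E i))).Adj v w} = 2 := by
  classical
  have hshare4 : ∀ i, C.Adj (a i) (b i) ∧ C.Adj (c i) (d i) ∧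
      ¬ C.Adj (b i) (c i) ∧ ¬ C.Adj (d i) (a i) :=
    fun i => ⟨(hshare i).1, (hshare i).2.1, (hshare i).2.2.1, (hshare i).2.2.2.1⟩
  have hEmem : ∀ i (s : Sym2 V), s ∈ E i ↔
      s = s(a i, b i) ∨ s = s(b i, c i) ∨ s = s(c i, d i) ∨ s = s(d i, a i) := by
    intro i s; rw [hE i]; simp [Set.mem_insert_iff]
  have habE : ∀ i, s(a i, b i) ∈ E i := fun i => (hEmem i _).mpr (Or.inl rfl)
  have hbcE : ∀ i, s(b i, c i) ∈ E i := fun i => (hEmem i _).mpr (Or.inr (Or.inl rfl))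
  have hcdE : ∀ i, s(c i, d i) ∈ E i := fun i => (hEmem i _).mpr (Or.inr (Or.inr (Or.inl rfl)))
  have hdaE : ∀ i, s(d i, a i) ∈ E i := fun i => (hEmem i _).mpr (Or.inr (Or.inr (Or.inr rfl)))
  have hEC : ∀ i (s : Sym2 V), s ∈ E i → s ∈ C.edgeSet →
      s = s(a i, b i) ∨ s = s(c i, d i) := by
    intro i s hs hsC
    obtain ⟨s1, s2, s3, s4⟩ := hshare4 i
    rcases (hEmem i s).mp hs with h | h | h | h
    · exact Or.inl h
    · exact absurd ((SimpleGraph.mem_edgeSet C).mp (h ▸ hsC)) s3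
    · exact Or.inr h
    · exact absurd ((SimpleGraph.mem_edgeSet C).mp (h ▸ hsC)) s4
  have hEG : ∀ i (x y : V), s(x, y) ∈ E i → G.Adj x y := by
    intro i x y hs
    obtain ⟨g1, g2, g3, g4⟩ := hGcyc i
    rcases (hEmem i _).mp hs with h | h | h | h <;>
      rcases Sym2.eq_iff.mp h with ⟨rfl, rfl⟩ | ⟨rfl, rfl⟩
    exacts [g1, g1.symm, g2, g2.symm, g3, g3.symm, g4, g4.symm]
  rw [show (⋃ i, E i) = ⋃ i ∈ (Finset.univ : Finset ι), E i by simp]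
  set HS : Finset ι → SimpleGraph V :=
    fun S => SimpleGraph.fromEdgeSet (symmDiff C.edgeSet (⋃ i ∈ S, E i)) with hHS
  have hHSadj : ∀ (S : Finset ι) (x y : V), (HS S).Adj x y ↔
      s(x, y) ∈ symmDiff C.edgeSet (⋃ i ∈ S, E i) ∧ x ≠ y := by
    intro S x y
    simp only [hHS]
    exact SimpleGraph.fromEdgeSet_adj _
  have h2S : ∀ (S : Finset ι) (v : V), Set.ncard {w | (HS S).Adj v w} = 2 :=
    fun S v => DEG C hC2 a b c d hquad E hE hdisj hshare4 S v
  set Rel : Finset ι → C.ConnectedComponent → C.ConnectedComponent → Prop :=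
    fun S K1 K2 => ∃ i ∈ S,
      (C.connectedComponentMk (a i) = K1 ∧ C.connectedComponentMk (c i) = K2) ∨
      (C.connectedComponentMk (a i) = K2 ∧ C.connectedComponentMk (c i) = K1) with hReldef
  -- the main reverse induction: prescribed reachability is realized
  have REV : ∀ S : Finset ι, ∀ u w : V,
      Relation.ReflTransGen (Rel S) (C.connectedComponentMk u) (C.connectedComponentMk w) →
      (HS S).Reachable u w := by
    intro S
    induction S using Finset.induction_on with
    | empty =>
      intro u w h
      have hmk0 : ∀ K K' : C.ConnectedComponent,
          Relation.ReflTransGen (Rel ∅) K K' → K = K' := by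
        intro K K' h'
        induction h' with
        | refl => rfl
        | tail _ hstep ih =>
          obtain ⟨j, hj, -⟩ := hstep
          exact absurd hj (Finset.notMem_empty j)
      have hmk : C.connectedComponentMk u = C.connectedComponentMk w := hmk0 _ _ h
      have hHSempty : HS ∅ = C := by
        simp only [hHS]
        rw [show (⋃ i ∈ (∅ : Finset ι), E i) = (∅ : Set (Sym2 V)) by simp]
        rw [show symmDiff C.edgeSet (∅ : Set (Sym2 V)) = C.edgeSet by
          simp [symmDiff_def]]
        exact SimpleGraph.fromEdgeSet_edgeSet C
      rw [hHSempty]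
      exact SimpleGraph.ConnectedComponent.eq.mp hmk
    | @insert i S hni ihS =>
      intro u w h
      obtain ⟨s1, s2, s3, s4⟩ := hshare4 i
      obtain ⟨n1, n2, n3, n4, n5, n6⟩ := quad_ne (hquad i)
      have hXab : (HS S).Adj (a i) (b i) := by
        rw [hHSadj, Set.mem_symmDiff]
        refine ⟨Or.inl ⟨(SimpleGraph.mem_edgeSet C).mpr s1, ?_⟩, n1⟩
        intro hmem
        simp only [Set.mem_iUnion] at hmem
        obtain ⟨j, hjS, hj⟩ := hmem
        exact Set.disjoint_left.mp (hdisj i j (fun hh => hni (hh ▸ hjS))) (habE i) hj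
      have hXcd : (HS S).Adj (c i) (d i) := by
        rw [hHSadj, Set.mem_symmDiff]
        refine ⟨Or.inl ⟨(SimpleGraph.mem_edgeSet C).mpr s2, ?_⟩, n6⟩
        intro hmem
        simp only [Set.mem_iUnion] at hmem
        obtain ⟨j, hjS, hj⟩ := hmem
        exact Set.disjoint_left.mp (hdisj i j (fun hh => hni (hh ▸ hjS))) (hcdE i) hj
      -- separation of the two components in `HS S`
      have hsep : ¬ (HS S).Reachable (a i) (c i) := by
        intro hr
        have hRS : Relation.ReflTransGen (Rel S)
            (C.connectedComponentMk (a i)) (C.connectedComponentMk (c i)) :=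
          FWD C a b c d hquad E hE hshare4 S (a i) (c i) hr
        set f : {j : ι // j ≠ i} → C.ConnectedComponent :=
          fun j => C.connectedComponentMk (a j.1) with hf
        set g : {j : ι // j ≠ i} → C.ConnectedComponent :=
          fun j => C.connectedComponentMk (c j.1) with hg
        set rk : C.ConnectedComponent → C.ConnectedComponent → Prop :=
          fun x y => ∃ j, (f j = x ∧ g j = y) ∨ (f j = y ∧ g j = x) with hrk
        have hac : Relation.ReflTransGen rk
            (C.connectedComponentMk (a i)) (C.connectedComponentMk (c i)) := by
          refine Relation.ReflTransGen.mono ?_ _ _ hRS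
          rintro K1 K2 ⟨j, hjS, hj⟩
          exact ⟨⟨j, fun hh => hni (hh ▸ hjS)⟩, hj⟩
        have hsymm : Symmetric rk := by
          rintro x y ⟨j, hj | hj⟩
          exacts [⟨j, Or.inr hj⟩, ⟨j, Or.inl hj⟩]
        have hall : ∀ K K', Relation.ReflTransGen rk K K' := by
          intro K K'
          have h1 : Relation.ReflTransGen (Relation.ReflTransGen rk) K K' := by
            refine Relation.ReflTransGen.mono ?_ _ _ (hconn K K')
            rintro K1 K2 ⟨j, hj⟩
            by_cases hji : j = i
            · subst hji
              rcases hj with ⟨h1, h2⟩ | ⟨h1, h2⟩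
              · rw [← h1, ← h2]; exact hac
              · rw [← h1, ← h2]; haveI : Std.Symm rk := ⟨fun x y h => hsymm h⟩; exact Std.Symm.symm _ _ hac
            · exact Relation.ReflTransGen.single ⟨⟨j, hji⟩, hj⟩
          rwa [Relation.reflTransGen_idem] at h1
        have hbound := treebound f g hall
        letI : DecidablePred (fun j : ι => j ≠ i) := Classical.decPred _
        have hlt : Fintype.card {j : ι // j ≠ i} < Fintype.card ι :=
          Fintype.card_subtype_lt (x := i) (by simp)
        have e1 : Nat.card {j : ι // j ≠ i} = Fintype.card {j : ι // j ≠ i} :=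
          Nat.card_eq_fintype_card
        have e2 : Nat.card ι = Fintype.card ι := Nat.card_eq_fintype_card
        omega
      have hab' : ((HS S).deleteEdges {s(a i, b i)}).Reachable (a i) (b i) :=
        no_bridge (HS S) (h2S S) hXab
      have hcd' : ((HS S).deleteEdges {s(c i, d i)}).Reachable (c i) (d i) :=
        no_bridge (HS S) (h2S S) hXcd
      set D : Set (Sym2 V) := {s(a i, b i), s(c i, d i)} with hD
      have habD : ((HS S).deleteEdges D).Reachable (a i) (b i) := by
        obtain ⟨p⟩ := hab'
        refine ⟨p.transfer _ ?_⟩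
        intro e he
        have he1 := p.edges_subset_edgeSet he
        rw [SimpleGraph.edgeSet_deleteEdges] at he1
        rw [SimpleGraph.edgeSet_deleteEdges]
        obtain ⟨heX, hene⟩ := he1
        refine ⟨heX, ?_⟩
        intro heD
        simp only [hD, Set.mem_insert_iff, Set.mem_singleton_iff] at heD
        rcases heD with h' | h'
        · exact hene (by rw [h']; exact rfl)
        · subst h'
          have hcsup : c i ∈ p.support := p.fst_mem_support_of_mem_edges he
          have : ((HS S).deleteEdges {s(a i, b i)}).Reachable (a i) (c i) :=
            ⟨p.takeUntil (c i) hcsup⟩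
          exact hsep (this.mono (SimpleGraph.deleteEdges_le _))
      have hcdD : ((HS S).deleteEdges D).Reachable (c i) (d i) := by
        obtain ⟨p⟩ := hcd'
        refine ⟨p.transfer _ ?_⟩
        intro e he
        have he1 := p.edges_subset_edgeSet he
        rw [SimpleGraph.edgeSet_deleteEdges] at he1
        rw [SimpleGraph.edgeSet_deleteEdges]
        obtain ⟨heX, hene⟩ := he1
        refine ⟨heX, ?_⟩
        intro heD
        simp only [hD, Set.mem_insert_iff, Set.mem_singleton_iff] at heD
        rcases heD with h' | h'
        · subst h'
          have hasup : a i ∈ p.support := p.fst_mem_support_of_mem_edges he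
          have : ((HS S).deleteEdges {s(c i, d i)}).Reachable (c i) (a i) :=
            ⟨p.takeUntil (a i) hasup⟩
          exact hsep (this.mono (SimpleGraph.deleteEdges_le _)).symm
        · exact hene (by rw [h']; exact rfl)
      have hXD : ∀ x y : V, (HS S).Reachable x y → ((HS S).deleteEdges D).Reachable x y := by
        refine reach_delete (HS S) D ?_
        intro e heD x y hexy
        simp only [hD, Set.mem_insert_iff, Set.mem_singleton_iff] at heD
        subst hexy
        rcases heD with h' | h'
        · rcases Sym2.eq_iff.mp h' with ⟨rfl, rfl⟩ | ⟨rfl, rfl⟩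
          exacts [habD, habD.symm]
        · rcases Sym2.eq_iff.mp h' with ⟨rfl, rfl⟩ | ⟨rfl, rfl⟩
          exacts [hcdD, hcdD.symm]
      have hDle : (HS S).deleteEdges D ≤ HS (insert i S) := by
        intro x y hxy
        rw [SimpleGraph.deleteEdges_adj] at hxy
        obtain ⟨hxyX, hxyD⟩ := hxy
        rw [hHSadj] at hxyX
        rw [hHSadj]
        obtain ⟨hm, hne⟩ := hxyX
        refine ⟨?_, hne⟩
        rw [Set.mem_symmDiff] at hm ⊢
        rcases hm with ⟨h1, h2⟩ | ⟨h1, h2⟩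
        · refine Or.inl ⟨h1, ?_⟩
          intro hmem
          simp only [Set.mem_iUnion] at hmem
          obtain ⟨j, hjmem, hj⟩ := hmem
          rcases Finset.mem_insert.mp hjmem with rfl | hjS
          · rcases hEC j _ hj h1 with h' | h'
            · exact hxyD (by rw [h']; exact Set.mem_insert _ _)
            · exact hxyD (by rw [h']; exact Set.mem_insert_of_mem _ rfl)
          · refine h2 ?_
            simp only [Set.mem_iUnion]
            exact ⟨j, hjS, hj⟩
        · refine Or.inr ⟨?_, h2⟩
          simp only [Set.mem_iUnion] at h1 ⊢
          obtain ⟨j, hjS, hj⟩ := h1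
          exact ⟨j, Finset.mem_insert_of_mem hjS, hj⟩
      have hXtoX' : ∀ x y : V, (HS S).Reachable x y → (HS (insert i S)).Reachable x y :=
        fun x y hh => (hXD x y hh).mono hDle
      have hsame : ∀ x y : V, C.connectedComponentMk x = C.connectedComponentMk y →
          (HS (insert i S)).Reachable x y := by
        intro x y hxy
        exact hXtoX' x y (ihS x y (by rw [hxy]))
      have hX'da : (HS (insert i S)).Adj (d i) (a i) := by
        rw [hHSadj, Set.mem_symmDiff]
        refine ⟨Or.inr ⟨?_, fun hh => s4 ((SimpleGraph.mem_edgeSet C).mp hh)⟩,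
          fun hh => n3 hh.symm⟩
        simp only [Set.mem_iUnion]
        exact ⟨i, Finset.mem_insert_self i S, hdaE i⟩
      have hacX' : (HS (insert i S)).Reachable (a i) (c i) :=
        (hX'da.symm.reachable).trans
          (hsame (d i) (c i) (SimpleGraph.ConnectedComponent.eq.mpr s2.symm.reachable))
      have hjac : ∀ j ∈ insert i S, (HS (insert i S)).Reachable (a j) (c j) := by
        intro j hj
        rcases Finset.mem_insert.mp hj with rfl | hjS
        · exact hacX'
        · exact hXtoX' _ _ (ihS (a j) (c j)
            (Relation.ReflTransGen.single ⟨j, hjS, Or.inl ⟨rfl, rfl⟩⟩))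
      have key : ∀ K1 K2, Relation.ReflTransGen (Rel (insert i S)) K1 K2 →
          ∀ x y : V, C.connectedComponentMk x = K1 → C.connectedComponentMk y = K2 →
          (HS (insert i S)).Reachable x y := by
        intro K1 K2 hK
        clear h
        induction hK with
        | refl =>
          intro x y h1 h2
          exact hsame x y (h1.trans h2.symm)
        | tail hprev hstep ihK =>
          intro x y h1 h2
          obtain ⟨j, hjmem, hj⟩ := hstep
          rcases hj with ⟨hja, hjc⟩ | ⟨hja, hjc⟩
          · exact ((ihK x (a j) h1 hja).trans (hjac j hjmem)).trans
              (hsame (c j) y (hjc.trans h2.symm))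
          · exact ((ihK x (c j) h1 hjc).trans (hjac j hjmem).symm).trans
              (hsame (a j) y (hja.trans h2.symm))
      exact key _ _ h u w rfl rfl
  refine ⟨?_, ?_, ?_⟩
  · -- subgraph of G
    intro x y hadj
    rw [hHSadj (Finset.univ), Set.mem_symmDiff] at hadj
    obtain ⟨hm, hne⟩ := hadj
    rcases hm with ⟨h1, -⟩ | ⟨h1, -⟩
    · exact hCG ((SimpleGraph.mem_edgeSet C).mp h1)
    · simp only [Set.mem_iUnion] at h1
      obtain ⟨i, -, hi⟩ := h1
      exact hEG i x y hi
  · -- connected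
    have hpos : 0 < Nat.card C.ConnectedComponent := by omega
    obtain ⟨⟨K⟩, -⟩ := Nat.card_pos_iff.mp hpos
    obtain ⟨v0⟩ : Nonempty V := by
      obtain ⟨v, -⟩ := Quot.exists_rep K
      exact ⟨v⟩
    rw [show SimpleGraph.fromEdgeSet (symmDiff C.edgeSet (⋃ i ∈ (Finset.univ : Finset ι), E i))
        = HS Finset.univ from rfl]
    rw [SimpleGraph.connected_iff]
    refine ⟨?_, ⟨v0⟩⟩
    intro u w
    refine REV Finset.univ u w ?_
    refine Relation.ReflTransGen.mono ?_ _ _ (hconn _ _)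
    rintro K1 K2 ⟨j, hj⟩
    exact ⟨j, Finset.mem_univ j, hj⟩
  · -- 2-regular
    exact fun v => h2S Finset.univ v
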